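/- Let D₀ ∈ E^n be a Euclidean distance matrix, let i < j, α ≠ 0, and D_n = D₀ + α E_{ij} ∉ E^n. Let X₀ = K_V†(D₀) ∈ S^{n-1}_+ be the facially reduced Gram matrix and X̄ = argmin_{X ⪰ 0} ½‖K_V(X) - D_n‖²_F the unique solution of the nearest-EDM problem. Then D₀ = K_V(X̄) (i.e., the nearest EDM to D_n is D₀) if and only if (D₀)_{ij} = 0 and α < 0. -/

import Mathlib

open Matrix BigOperators

noncomputable section

/-- `D` is a Euclidean distance matrix: the matrix of squared pairwise
distances of some points. -/
def IsEDM {n : ℕ} (D : Matrix (Fin n) (Fin n) ℝ) : Prop :=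
  ∃ (d : ℕ) (p : Fin n → Fin d → ℝ), ∀ i j, D i j = ∑ t, (p i t - p j t) ^ 2

/-- The unit matrix `E_{ij}`. -/
def unitMat {n : ℕ} (i j : Fin n) : Matrix (Fin n) (Fin n) ℝ :=
  Matrix.single i j 1 + Matrix.single j i 1

/-- The Lindenstrauss operator. -/
def lind {ι : Type*} [Fintype ι] (M : Matrix ι ι ℝ) : Matrix ι ι ℝ :=
  Matrix.of fun i j => M i i + M j j - 2 * M i j

/-- Squared Frobenius norm. -/
def frob2 {ι : Type*} [Fintype ι] (A : Matrix ι ι ℝ) : ℝ := Matrix.trace (Aᵀ * A)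

namespace NEDM

lemma sum_sq_expand {d : ℕ} (f g : Fin d → ℝ) :
    ((∑ t, f t * f t) + ∑ t, g t * g t) - 2 * ∑ t, f t * g t
      = ∑ t, (f t - g t) ^ 2 := by
  rw [Finset.mul_sum, ← Finset.sum_add_distrib, ← Finset.sum_sub_distrib]
  exact Finset.sum_congr rfl fun t _ => by ring

lemma frob2_eq {ι : Type*} [Fintype ι] (A : Matrix ι ι ℝ) :
    frob2 A = ∑ k, ∑ l, A k l ^ 2 := by
  simp only [frob2, Matrix.trace, Matrix.diag, Matrix.mul_apply, Matrix.transpose_apply]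
  rw [Finset.sum_comm]
  simp [sq]

lemma frob2_nonneg {ι : Type*} [Fintype ι] (A : Matrix ι ι ℝ) : 0 ≤ frob2 A := by
  rw [frob2_eq]; positivity

lemma sq_le_frob2 {ι : Type*} [Fintype ι] (A : Matrix ι ι ℝ) (k l : ι) :
    A k l ^ 2 ≤ frob2 A := by
  rw [frob2_eq]
  calc A k l ^ 2 ≤ ∑ l', A k l' ^ 2 :=
        Finset.single_le_sum (f := fun l' => A k l' ^ 2)
          (fun _ _ => sq_nonneg _) (Finset.mem_univ l)
    _ ≤ ∑ k', ∑ l', A k' l' ^ 2 :=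
        Finset.single_le_sum (f := fun k' => ∑ l', A k' l' ^ 2)
          (fun _ _ => Finset.sum_nonneg fun _ _ => sq_nonneg _) (Finset.mem_univ k)

lemma eq_zero_of_frob2 {ι : Type*} [Fintype ι] {A : Matrix ι ι ℝ} (h : frob2 A = 0) :
    A = 0 := by
  funext k l
  have h2 : A k l ^ 2 ≤ 0 := h ▸ sq_le_frob2 A k l
  have h3 : A k l ^ 2 = 0 := le_antisymm h2 (sq_nonneg _)
  simpa using pow_eq_zero_iff two_ne_zero |>.mp h3

lemma frob2_smul {ι : Type*} [Fintype ι] (c : ℝ) (A : Matrix ι ι ℝ) :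
    frob2 (c • A) = c ^ 2 * frob2 A := by
  simp only [frob2_eq, Matrix.smul_apply, smul_eq_mul, mul_pow, Finset.mul_sum]

lemma IsEDM.entry_nonneg {n : ℕ} {D : Matrix (Fin n) (Fin n) ℝ} (h : IsEDM D)
    (k l : Fin n) : 0 ≤ D k l := by
  obtain ⟨d, p, hp⟩ := h
  rw [hp]; positivity

lemma IsEDM.symm_entry {n : ℕ} {D : Matrix (Fin n) (Fin n) ℝ} (h : IsEDM D)
    (k l : Fin n) : D k l = D l k := by
  obtain ⟨d, p, hp⟩ := h
  rw [hp, hp]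
  exact Finset.sum_congr rfl fun t _ => by ring

lemma IsEDM.add {n : ℕ} {A B : Matrix (Fin n) (Fin n) ℝ} (hA : IsEDM A) (hB : IsEDM B) :
    IsEDM (A + B) := by
  obtain ⟨d1, p, hp⟩ := hA
  obtain ⟨d2, q, hq⟩ := hB
  refine ⟨d1 + d2, fun k => Fin.append (p k) (q k), fun k l => ?_⟩
  rw [Matrix.add_apply, hp, hq, Fin.sum_univ_add]
  simp [Fin.append_left, Fin.append_right]

lemma IsEDM.smul {n : ℕ} {A : Matrix (Fin n) (Fin n) ℝ} (hA : IsEDM A) {t : ℝ}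
    (ht : 0 ≤ t) : IsEDM (t • A) := by
  obtain ⟨d, p, hp⟩ := hA
  refine ⟨d, fun k s => Real.sqrt t * p k s, fun k l => ?_⟩
  rw [Matrix.smul_apply, hp, smul_eq_mul, Finset.mul_sum]
  refine Finset.sum_congr rfl fun s _ => ?_
  rw [← mul_sub, mul_pow, Real.sq_sqrt ht]

lemma isEDM_lind_transpose_mul {n d : ℕ} (B : Matrix (Fin d) (Fin n) ℝ) :
    IsEDM (lind (Bᵀ * B)) := by
  refine ⟨d, fun k s => B s k, fun k l => ?_⟩
  rw [← sum_sq_expand]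
  simp only [lind, Matrix.of_apply, Matrix.mul_apply, Matrix.transpose_apply]

lemma isEDM_lind_psd {n r : ℕ} (V : Matrix (Fin n) (Fin r) ℝ)
    {X : Matrix (Fin r) (Fin r) ℝ} (hX : X.PosSemidef) :
    IsEDM (lind (V * X * Vᵀ)) := by
  obtain ⟨B, hB⟩ := by
    open scoped MatrixOrder in exact CStarAlgebra.nonneg_iff_eq_star_mul_self.mp hX.nonneg
  rw [Matrix.star_eq_conjTranspose] at hB
  subst hB
  have h : V * (Bᴴ * B) * Vᵀ = (B * Vᵀ)ᵀ * (B * Vᵀ) := by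
    rw [Matrix.transpose_mul, Matrix.transpose_transpose,
      Matrix.conjTranspose_eq_transpose_of_trivial]
    simp only [Matrix.mul_assoc]
  rw [h]
  exact isEDM_lind_transpose_mul _

lemma isEDM_split {n : ℕ} (j : Fin n) :
    IsEDM (Matrix.of fun k l => ((if k = j then (1:ℝ) else 0) - (if l = j then 1 else 0)) ^ 2) :=
  ⟨1, fun k _ => if k = j then 1 else 0, fun k l => by simp⟩

lemma unitMat_apply {n : ℕ} (i j k l : Fin n) :
    unitMat i j k l = (if i = k ∧ j = l then (1:ℝ) else 0) + (if j = k ∧ i = l then 1 else 0) := by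
  simp [unitMat, Matrix.single]

lemma sum_mul_unitMat {n : ℕ} (M : Matrix (Fin n) (Fin n) ℝ) (i j : Fin n) :
    ∑ k, ∑ l, M k l * unitMat i j k l = M i j + M j i := by
  simp only [unitMat_apply, mul_add, Finset.sum_add_distrib, mul_ite, mul_one, mul_zero,
    ite_and]
  simp [Finset.sum_ite_eq]

lemma unitMat_apply_same {n : ℕ} {i j : Fin n} (hij : i ≠ j) :
    unitMat i j i j = 1 ∧ unitMat i j j i = 1 := by
  constructor <;> simp [unitMat, Matrix.single, hij, hij.symm]

lemma frob2_sub_smul_unit {n : ℕ} {i j : Fin n} (hij : i ≠ j)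
    (M : Matrix (Fin n) (Fin n) ℝ) (α : ℝ) :
    frob2 (M - α • unitMat i j) = frob2 M - 2*α*(M i j + M j i) + 2*α^2 := by
  have expand : ∀ k l : Fin n, (M - α • unitMat i j) k l ^ 2
      = M k l ^ 2 - 2*α*(M k l * unitMat i j k l)
        + α^2 * (unitMat i j k l * unitMat i j k l) := by
    intro k l
    simp only [Matrix.sub_apply, Matrix.smul_apply, smul_eq_mul]
    ring
  rw [frob2_eq, frob2_eq]
  simp only [expand]
  simp only [Finset.sum_sub_distrib, Finset.sum_add_distrib, ← Finset.mul_sum]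
  rw [sum_mul_unitMat M, sum_mul_unitMat (unitMat i j)]
  rw [(unitMat_apply_same hij).1, (unitMat_apply_same hij).2]
  ring

lemma psd_smul {r : ℕ} {X : Matrix (Fin r) (Fin r) ℝ} (hX : X.PosSemidef) {t : ℝ}
    (ht : 0 ≤ t) : (t • X).PosSemidef := by
  exact hX.smul ht

lemma lind_smul {ι : Type*} [Fintype ι] (t : ℝ) (M : Matrix ι ι ℝ) :
    lind (t • M) = t • lind M := by
  funext k l
  simp only [lind, Matrix.of_apply, Matrix.smul_apply, smul_eq_mul]
  ring

lemma exists_psd {m : ℕ} (V : Matrix (Fin (m+1)) (Fin m) ℝ)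
    (hV : Vᵀ * V = 1) (hVe : Vᵀ *ᵥ (fun _ => (1:ℝ)) = 0)
    {D : Matrix (Fin (m+1)) (Fin (m+1)) ℝ} (hD : IsEDM D) :
    ∃ X : Matrix (Fin m) (Fin m) ℝ, X.PosSemidef ∧ lind (V * X * Vᵀ) = D := by
  classical
  obtain ⟨d, p, hp⟩ := hD
  set P : Matrix (Fin (m+1)) (Fin d) ℝ := Matrix.of p with hP
  set G : Matrix (Fin (m+1)) (Fin (m+1)) ℝ := P * Pᵀ with hG
  have hGapp : ∀ a b, G a b = ∑ t, p a t * p b t := by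
    intro a b
    simp [hG, Matrix.mul_apply, hP]
  have hGsym : ∀ a b, G a b = G b a := by
    intro a b; rw [hGapp, hGapp]; exact Finset.sum_congr rfl fun t _ => mul_comm _ _
  have hlindG : lind G = D := by
    funext k l
    rw [lind, Matrix.of_apply, hp, ← sum_sq_expand, hGapp, hGapp, hGapp]
  set c : ℝ := ((m:ℝ)+1)⁻¹ with hc
  have hm1 : ((m:ℝ)+1) ≠ 0 := by positivity
  set W : Matrix (Fin (m+1)) (Fin (m+1)) ℝ :=
    Matrix.of (fun k a => if h : (a:ℕ) < m then V k ⟨a.1, h⟩ else (Real.sqrt ((m:ℝ)+1))⁻¹)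
    with hW
  have hWtW : Wᵀ * W = 1 := by
    funext a b
    rw [Matrix.mul_apply, Matrix.one_apply]
    by_cases ha : (a:ℕ) < m <;> by_cases hb : (b:ℕ) < m
    · have h1 := congrFun (congrFun hV ⟨a.1, ha⟩) ⟨b.1, hb⟩
      rw [Matrix.mul_apply, Matrix.one_apply] at h1
      simp only [Matrix.transpose_apply] at h1
      simp only [hW, Matrix.of_apply, Matrix.transpose_apply, dif_pos ha, dif_pos hb]
      rw [h1]
      congr 1
      simp [Fin.ext_iff]
    · have hab : a ≠ b := fun h => hb (h ▸ ha)
      rw [if_neg hab]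
      have h1 := congrFun hVe ⟨a.1, ha⟩
      rw [Matrix.mulVec, dotProduct] at h1
      simp only [Matrix.transpose_apply, mul_one, Pi.zero_apply] at h1
      simp only [hW, Matrix.of_apply, Matrix.transpose_apply, dif_pos ha, dif_neg hb]
      rw [← Finset.sum_mul, h1, zero_mul]
    · have hab : a ≠ b := fun h => ha (h ▸ hb)
      rw [if_neg hab]
      have h1 := congrFun hVe ⟨b.1, hb⟩
      rw [Matrix.mulVec, dotProduct] at h1
      simp only [Matrix.transpose_apply, mul_one, Pi.zero_apply] at h1
      simp only [hW, Matrix.of_apply, Matrix.transpose_apply, dif_neg ha, dif_pos hb]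
      rw [← Finset.mul_sum, h1, mul_zero]
    · have hab : a = b := by
        have := a.2; have := b.2
        apply Fin.ext; omega
      rw [if_pos hab]
      simp only [hW, Matrix.of_apply, Matrix.transpose_apply, dif_neg ha, dif_neg hb]
      rw [Finset.sum_const, Finset.card_univ, Fintype.card_fin, nsmul_eq_mul,
        ← Real.sqrt_inv, Real.mul_self_sqrt (by positivity)]
      push_cast
      field_simp
  have hWWt : W * Wᵀ = 1 := mul_eq_one_comm.mp hWtW
  have hA : ∀ k l, (V * Vᵀ) k l = (if k = l then 1 else 0) - c := by
    intro k l
    have h1 := congrFun (congrFun hWWt k) l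
    rw [Matrix.mul_apply, Matrix.one_apply] at h1
    rw [Fin.sum_univ_castSucc] at h1
    have hlast : ∀ k', W k' (Fin.last m) = (Real.sqrt ((m:ℝ)+1))⁻¹ := by
      intro k'
      simp [hW, Fin.last]
    have hcast : ∀ (k' : Fin (m+1)) (a : Fin m), W k' a.castSucc = V k' a := by
      intro k' a
      simp only [hW, Matrix.of_apply, Fin.coe_castSucc, dif_pos a.2]
    simp only [Matrix.transpose_apply, hlast, hcast] at h1
    have hsq : (Real.sqrt ((m:ℝ)+1))⁻¹ * (Real.sqrt ((m:ℝ)+1))⁻¹ = c := by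
      rw [← Real.sqrt_inv, Real.mul_self_sqrt (by positivity), hc]
    rw [hsq] at h1
    rw [Matrix.mul_apply]
    simp only [Matrix.transpose_apply]
    linarith [h1]
  have hGpsd : G.PosSemidef := by
    rw [hG, ← Matrix.conjTranspose_eq_transpose_of_trivial]
    exact Matrix.posSemidef_self_mul_conjTranspose P
  have hXpsd : (Vᵀ * G * V).PosSemidef := by
    have h2 := hGpsd.conjTranspose_mul_mul_same V
    rwa [Matrix.conjTranspose_eq_transpose_of_trivial] at h2
  refine ⟨Vᵀ * G * V, hXpsd, ?_⟩
  have claim1 : ∀ k b, (V * Vᵀ * G) k b = G k b - c * ∑ a, G a b := by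
    intro k b
    rw [Matrix.mul_apply]
    simp only [hA, sub_mul, ite_mul, one_mul, zero_mul]
    rw [Finset.sum_sub_distrib, Finset.sum_ite_eq, if_pos (Finset.mem_univ k),
      ← Finset.mul_sum]
  have claim2 : ∀ k l, (V * Vᵀ * G * V * Vᵀ) k l
      = G k l - c * (∑ a, G a l) - c * (∑ b, G k b) + c * c * (∑ a, ∑ b, G a b) := by
    intro k l
    have hassoc : V * Vᵀ * G * V * Vᵀ = (V * Vᵀ * G) * (V * Vᵀ) :=
      Matrix.mul_assoc _ _ _
    rw [hassoc, Matrix.mul_apply]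
    simp only [claim1, hA, mul_sub, mul_ite, mul_one, mul_zero]
    rw [Finset.sum_sub_distrib, Finset.sum_ite_eq', if_pos (Finset.mem_univ l)]
    have e1 : ∑ x, (G k x - c * ∑ a, G a x) * c
        = c * (∑ b, G k b) - c * c * (∑ a, ∑ b, G a b) := by
      have e0 : ∀ x, (G k x - c * ∑ a, G a x) * c
          = c * G k x - c * c * ∑ a, G a x := fun x => by ring
      simp only [e0, Finset.sum_sub_distrib, ← Finset.mul_sum]
      rw [Finset.sum_comm]
    rw [e1]
    ring
  have hRS : ∀ k, (∑ b, G k b) = ∑ a, G a k := by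
    intro k
    exact Finset.sum_congr rfl fun b _ => hGsym k b
  have hassoc2 : V * (Vᵀ * G * V) * Vᵀ = V * Vᵀ * G * V * Vᵀ := by
    simp only [Matrix.mul_assoc]
  rw [hassoc2, ← hlindG]
  funext k l
  simp only [lind, Matrix.of_apply, claim2]
  linear_combination c * hRS k - c * hRS l

end NEDM

/-- The nearest-EDM problem recovers `D₀` from the corrupted `D_n = D₀ + α E_{ij}`
if and only if `(D₀)_{ij} = 0` and `α < 0`. -/
theorem nearest_EDM_characterization (n : ℕ) (D₀ : Matrix (Fin n) (Fin n) ℝ)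
    (hD₀ : IsEDM D₀) (i j : Fin n) (hij : i < j) (α : ℝ) (hα : α ≠ 0)
    (Dn : Matrix (Fin n) (Fin n) ℝ) (hDn : Dn = D₀ + α • unitMat i j)
    (hnot : ¬ IsEDM Dn)
    (V : Matrix (Fin n) (Fin (n - 1)) ℝ)
    (hV : Vᵀ * V = 1) (hVe : Vᵀ *ᵥ (fun _ => (1 : ℝ)) = 0)
    (Xbar : Matrix (Fin (n - 1)) (Fin (n - 1)) ℝ) (hXbar : Xbar.PosSemidef)
    (hmin : ∀ X : Matrix (Fin (n - 1)) (Fin (n - 1)) ℝ, X.PosSemidef →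
      frob2 (lind (V * Xbar * Vᵀ) - Dn) ≤ frob2 (lind (V * X * Vᵀ) - Dn)) :
    D₀ = lind (V * Xbar * Vᵀ) ↔ (D₀ i j = 0 ∧ α < 0) := by
  subst hDn
  have hne : i ≠ j := Fin.ne_of_lt hij
  have hn0 : n ≠ 0 := by rintro rfl; exact i.elim0
  obtain ⟨m, rfl⟩ := Nat.exists_eq_succ_of_ne_zero hn0
  obtain ⟨X₀, hX₀psd, hX₀⟩ := NEDM.exists_psd V hV hVe hD₀
  have h2α : frob2 (D₀ - (D₀ + α • unitMat i j)) = 2*α^2 := by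
    have e : D₀ - (D₀ + α • unitMat i j) = (0 : Matrix (Fin (m+1)) (Fin (m+1)) ℝ)
        - α • unitMat i j := by abel
    rw [e, NEDM.frob2_sub_smul_unit hne]
    simp [NEDM.frob2_eq]
  constructor
  · intro hEq
    have hmin' : ∀ (Dc : Matrix (Fin (m+1)) (Fin (m+1)) ℝ), IsEDM Dc →
        2*α^2 ≤ frob2 (Dc - (D₀ + α • unitMat i j)) := by
      intro Dc hDc
      obtain ⟨X, hXpsd, hX⟩ := NEDM.exists_psd V hV hVe hDc
      have h := hmin X hXpsd
      rw [← hEq, hX, h2α] at h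
      exact h
    have key1 : ∀ t : ℝ, 0 ≤ t →
        0 ≤ (t-1)^2 * frob2 D₀ - 4*α*(t-1)*(D₀ i j) := by
      intro t ht
      have h := hmin' (t • D₀) (NEDM.IsEDM.smul hD₀ ht)
      have hsub : t • D₀ - (D₀ + α • unitMat i j)
          = ((t-1) • D₀) - α • unitMat i j := by
        rw [sub_smul, one_smul]; abel
      rw [hsub, NEDM.frob2_sub_smul_unit hne, NEDM.frob2_smul] at h
      have hji : D₀ j i = D₀ i j := NEDM.IsEDM.symm_entry hD₀ j i
      simp only [Matrix.smul_apply, smul_eq_mul, hji] at h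
      nlinarith [h]
    have hij0 : D₀ i j = 0 := by
      by_contra hne0
      have hpos : 0 < D₀ i j := lt_of_le_of_ne (NEDM.IsEDM.entry_nonneg hD₀ i j) (Ne.symm hne0)
      have hc₀ : 0 < frob2 D₀ :=
        lt_of_lt_of_le (by positivity) (NEDM.sq_le_frob2 D₀ i j)
      set c₀ := frob2 D₀ with hc₀def
      set β := 4*α*(D₀ i j) with hβdef
      have hβne : β ≠ 0 := by
        simp only [hβdef]
        exact mul_ne_zero (mul_ne_zero (by norm_num) hα) hne0
      rcases le_or_gt (-1 : ℝ) (β / (2*c₀)) with hge | hlt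
      · set s := β / (2*c₀) with hsdef
        have ht : (0:ℝ) ≤ 1 + s := by linarith
        have h := key1 (1 + s) ht
        have hs : s * (2*c₀) = β := div_mul_cancel₀ _ (by positivity)
        have hsne : s ≠ 0 := by
          intro h0
          rw [h0, zero_mul] at hs
          exact hβne hs.symm
        have hs2 : 0 < s^2 := by positivity
        have hβs : 4*α*((1+s)-1)*(D₀ i j) = β * s := by rw [hβdef]; ring
        rw [hβs] at h
        have hβ2 : β * s = 2*c₀*s^2 := by rw [← hs]; ring
        nlinarith [h, hβ2, hs2, hc₀]
      · have h := key1 0 le_rfl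
        have hβlt : β < -(2*c₀) := by
          have := (div_lt_iff₀ (by positivity : (0:ℝ) < 2*c₀)).mp hlt
          linarith
        have h' : 0 ≤ c₀ + β := by nlinarith [h]
        linarith
    refine ⟨hij0, ?_⟩
    set D1 : Matrix (Fin (m+1)) (Fin (m+1)) ℝ :=
      Matrix.of (fun k l => ((if k = j then (1:ℝ) else 0) - (if l = j then 1 else 0))^2)
      with hD1def
    have hD1 : IsEDM D1 := NEDM.isEDM_split j
    have hD1ij : D1 i j = 1 := by simp [hD1def, hne]
    have hD1ji : D1 j i = 1 := by simp [hD1def, hne]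
    have key2 : ∀ t : ℝ, 0 ≤ t → 0 ≤ t^2 * frob2 D1 - 4*α*t := by
      intro t ht
      have h := hmin' (D₀ + t • D1) (NEDM.IsEDM.add hD₀ (NEDM.IsEDM.smul hD1 ht))
      have hsub : (D₀ + t • D1) - (D₀ + α • unitMat i j)
          = t • D1 - α • unitMat i j := by abel
      rw [hsub, NEDM.frob2_sub_smul_unit hne, NEDM.frob2_smul] at h
      simp only [Matrix.smul_apply, smul_eq_mul, hD1ij, hD1ji, mul_one] at h
      nlinarith [h]
    rcases lt_or_gt_of_ne hα with hlt | hgt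
    · exact hlt
    · exfalso
      have hc₁ : 0 ≤ frob2 D1 := NEDM.frob2_nonneg D1
      rcases eq_or_lt_of_le hc₁ with hc0 | hcpos
      · have h := key2 1 zero_le_one
        rw [← hc0] at h
        nlinarith [h, hgt]
      · have h := key2 (2*α/frob2 D1) (by positivity)
        have hx : 2*α/frob2 D1 * frob2 D1 = 2*α :=
          div_mul_cancel₀ _ (ne_of_gt hcpos)
        nlinarith [h, hx, hcpos, hgt]
  · rintro ⟨h0, hneg⟩
    have hDstEDM : IsEDM (lind (V * Xbar * Vᵀ)) := NEDM.isEDM_lind_psd V hXbar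
    have h := hmin X₀ hX₀psd
    rw [hX₀, h2α] at h
    set Dst := lind (V * Xbar * Vᵀ) with hDstdef
    have hsub : Dst - (D₀ + α • unitMat i j) = (Dst - D₀) - α • unitMat i j := by abel
    rw [hsub, NEDM.frob2_sub_smul_unit hne] at h
    have hD0ji : D₀ j i = 0 := by rw [NEDM.IsEDM.symm_entry hD₀ j i, h0]
    have hij' : (Dst - D₀) i j = Dst i j := by simp [Matrix.sub_apply, h0]
    have hji' : (Dst - D₀) j i = Dst j i := by simp [Matrix.sub_apply, hD0ji]
    rw [hij', hji'] at h
    have hDst_ij : 0 ≤ Dst i j := NEDM.IsEDM.entry_nonneg hDstEDM i j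
    have hDst_ji : 0 ≤ Dst j i := NEDM.IsEDM.entry_nonneg hDstEDM j i
    have hprod : 0 ≤ (-2*α)*(Dst i j + Dst j i) := by
      apply mul_nonneg <;> linarith
    have hf0 : frob2 (Dst - D₀) ≤ 0 := by nlinarith [h, hprod]
    have hz : Dst - D₀ = 0 :=
      NEDM.eq_zero_of_frob2 (le_antisymm hf0 (NEDM.frob2_nonneg _))
    have : Dst = D₀ := by rwa [sub_eq_zero] at hz
    exact this.symm
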